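/- Let β ∈ (0,1), α ∈ (1,2), and let l and l_ν be continuous functions from (0,∞) to (0,∞) that are slowly varying at infinity. Then there exist functions ε ↦ ε'(ε) and ε ↦ ε''(ε) from (0,1] to (0,∞) such that, as ε → 0+: ε'(ε) → 0, ε''(ε) → 0, ε''(ε)/ε → 0, (ε''(ε)/ε'(ε)) / ((ε''(ε))^β · l(1/ε''(ε))) → 1, and ε'(ε) · (ε/ε''(ε))^α · l_ν(ε/ε''(ε)) → 1. -/

import Mathlib

open Filter Set

lemma sv_log_tendsto {l : ℝ → ℝ}
    (hc : ContinuousOn l (Set.Ioi 0)) (hp : ∀ x > (0:ℝ), 0 < l x)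
    (hsv : ∀ lam > (0:ℝ), Tendsto (fun x => l (lam * x) / l x) atTop (nhds 1)) :
    Tendsto (fun x => Real.log (l x) / Real.log x) atTop (nhds 0) := by
  rw [NormedAddCommGroup.tendsto_nhds_zero]
  intro ε hε
  set ε' := ε/2 with hε'def
  have hε' : 0 < ε' := by positivity
  -- increment bound
  have hE := hsv (Real.exp 1) (Real.exp_pos 1)
  have hlog : Tendsto (fun x => Real.log (l (Real.exp 1 * x) / l x)) atTop (nhds 0) := by
    have := (Real.continuousAt_log one_ne_zero).tendsto.comp hE
    simpa [Function.comp_def] using this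
  have hEv : ∀ᶠ x in atTop, |Real.log (l (Real.exp 1 * x)) - Real.log (l x)| ≤ ε' := by
    have h1 := hlog.eventually (eventually_abs_sub_lt 0 hε')
    filter_upwards [h1, eventually_gt_atTop 0] with x hx hx0
    have hpx := hp x hx0
    have hpex := hp (Real.exp 1 * x) (by positivity)
    rw [Real.log_div hpex.ne' hpx.ne'] at hx
    simp only [sub_zero] at hx
    exact le_of_lt hx
  obtain ⟨X₀, hX₀⟩ := hEv.exists_forall_of_atTop
  set X := max X₀ 1 with hXdef
  have hX1 : (1:ℝ) ≤ X := le_max_right _ _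
  have hX0 : (0:ℝ) < X := lt_of_lt_of_le one_pos hX1
  have hXinc : ∀ x, X ≤ x → |Real.log (l (Real.exp 1 * x)) - Real.log (l x)| ≤ ε' :=
    fun x hx => hX₀ x (le_trans (le_max_left _ _) hx)
  -- bound on compact
  have hcomp : IsCompact (Set.Icc X (Real.exp 1 * X)) := isCompact_Icc
  have hsub : Set.Icc X (Real.exp 1 * X) ⊆ Set.Ioi 0 := fun x hx => lt_of_lt_of_le hX0 hx.1
  have hcont2 : ContinuousOn (fun x => Real.log (l x)) (Set.Icc X (Real.exp 1 * X)) := by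
    apply ContinuousOn.log (hc.mono hsub)
    intro x hx; exact (hp x (hsub hx)).ne'
  obtain ⟨C, hC⟩ := hcomp.exists_bound_of_continuousOn hcont2
  have hXle : X ≤ Real.exp 1 * X := by
    nlinarith [Real.exp_one_gt_d9, hX0]
  have hC0 : 0 ≤ C := le_trans (norm_nonneg _) (hC X ⟨le_refl _, hXle⟩)
  -- induction claim
  have claim : ∀ n : ℕ, ∀ x, X ≤ x → x ≤ X * Real.exp (n+1) → |Real.log (l x)| ≤ C + ε' * n := by
    intro n
    induction n with
    | zero =>
      intro x hx1 hx2
      simp only [Nat.cast_zero, zero_add, mul_zero, add_zero]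
      have := hC x ⟨hx1, by rw [mul_comm]; simpa using hx2⟩
      simpa using this
    | succ n ih =>
      intro x hx1 hx2
      by_cases hcase : x ≤ X * Real.exp 1
      · have := hC x ⟨hx1, by rw [mul_comm]; simpa using hcase⟩
        have : |Real.log (l x)| ≤ C := by simpa using this
        have : (0:ℝ) ≤ ε' * (n+1) := by positivity
        push_cast
        linarith [hC x ⟨hx1, by rw [mul_comm]; simpa using hcase⟩, abs_nonneg (Real.log (l x))]
      · push_neg at hcase
        set y := x / Real.exp 1 with hy
        have hy1 : X ≤ y := by
          rw [hy, le_div_iff₀ (Real.exp_pos 1)]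
          linarith [hcase]
        have hy2 : y ≤ X * Real.exp (n+1) := by
          rw [hy, div_le_iff₀ (Real.exp_pos 1)]
          calc x ≤ X * Real.exp (n+1+1) := by push_cast at hx2 ⊢; linarith
          _ = X * Real.exp (↑n+1) * Real.exp 1 := by rw [mul_assoc, ← Real.exp_add]
        have hih := ih y hy1 hy2
        have hinc := hXinc y hy1
        have hxy : Real.exp 1 * y = x := by
          rw [hy]; field_simp
        rw [hxy] at hinc
        push_cast
        calc |Real.log (l x)| ≤ |Real.log (l y)| + |Real.log (l x) - Real.log (l y)| := by
              have := abs_sub_abs_le_abs_sub (Real.log (l x)) (Real.log (l y)); linarith [abs_sub_comm (Real.log (l x)) (Real.log (l y)), abs_add_le (Real.log (l y)) (Real.log (l x) - Real.log (l y))]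
          _ ≤ (C + ε' * n) + ε' := by push_cast at hih; linarith
          _ = C + ε' * (n + 1) := by ring
  -- final bound for all x ≥ X
  have bound : ∀ x, X ≤ x → |Real.log (l x)| ≤ C + ε' * (Real.log x + 1) := by
    intro x hx
    have hx0 : 0 < x := lt_of_lt_of_le hX0 hx
    set n := ⌊Real.log (x / X)⌋₊ with hn
    have hlognn : 0 ≤ Real.log (x / X) := by
      apply Real.log_nonneg
      rw [le_div_iff₀ hX0]; linarith
    have h1 : Real.log (x / X) < n + 1 := Nat.lt_floor_add_one _
    have h2 : x ≤ X * Real.exp (n + 1) := by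
      have : x / X = Real.exp (Real.log (x / X)) := (Real.exp_log (by positivity)).symm
      have hle : Real.exp (Real.log (x/X)) ≤ Real.exp (n+1) := Real.exp_le_exp.2 (le_of_lt h1)
      calc x = X * (x / X) := by field_simp
        _ ≤ X * Real.exp (n+1) := by rw [this]; exact mul_le_mul_of_nonneg_left hle hX0.le
    have h3 := claim n x hx h2
    have h4 : (n:ℝ) ≤ Real.log (x / X) := Nat.floor_le hlognn
    have h5 : Real.log (x / X) ≤ Real.log x := by
      rw [Real.log_div hx0.ne' hX0.ne']
      have : 0 ≤ Real.log X := Real.log_nonneg hX1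
      linarith
    nlinarith [hε'.le]
  -- conclude
  have hlogTop := Real.tendsto_log_atTop
  filter_upwards [eventually_ge_atTop X, hlogTop.eventually (eventually_gt_atTop (max (2*(C+ε')/ε) 0))] with x hx hlx
  have hlogpos : 0 < Real.log x := lt_of_le_of_lt (le_max_right _ _) hlx
  have hb := bound x hx
  have hlx2 : 2*(C+ε')/ε < Real.log x := lt_of_le_of_lt (le_max_left _ _) hlx
  rw [Real.norm_eq_abs, abs_div, abs_of_pos hlogpos, div_lt_iff₀ hlogpos]
  have : C + ε' < ε/2 * Real.log x := by
    rw [div_lt_iff₀ hε, mul_comm] at hlx2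
    nlinarith
  nlinarith [hb, abs_nonneg (Real.log (l x))]

lemma sv_rpow_mul_atTop {l : ℝ → ℝ}
    (hc : ContinuousOn l (Set.Ioi 0)) (hp : ∀ x > (0:ℝ), 0 < l x)
    (hsv : ∀ lam > (0:ℝ), Tendsto (fun x => l (lam * x) / l x) atTop (nhds 1))
    {δ : ℝ} (hδ : 0 < δ) :
    Tendsto (fun x => x ^ δ * l x) atTop atTop := by
  have h := sv_log_tendsto hc hp hsv
  have h2 : Tendsto (fun x => Real.log x * (δ + Real.log (l x) / Real.log x)) atTop atTop := by
    apply Filter.Tendsto.atTop_mul_pos hδ Real.tendsto_log_atTop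
    simpa using (tendsto_const_nhds (x := δ)).add h
  apply (Real.tendsto_exp_atTop.comp h2).congr'
  filter_upwards [eventually_gt_atTop 1] with x hx
  have hx0 : (0:ℝ) < x := lt_trans one_pos hx
  have hlx : Real.log x ≠ 0 := (Real.log_pos hx).ne'
  have : Real.log x * (δ + Real.log (l x) / Real.log x) = Real.log x * δ + Real.log (l x) := by
    field_simp
  simp only [Function.comp_apply, this, Real.exp_add, Real.exp_log (hp x hx0),
    ← Real.rpow_def_of_pos hx0]

lemma sv_div_rpow_zero {l : ℝ → ℝ}
    (hc : ContinuousOn l (Set.Ioi 0)) (hp : ∀ x > (0:ℝ), 0 < l x)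
    (hsv : ∀ lam > (0:ℝ), Tendsto (fun x => l (lam * x) / l x) atTop (nhds 1))
    {δ : ℝ} (hδ : 0 < δ) :
    Tendsto (fun x => l x / x ^ δ) atTop (nhds 0) := by
  have hc' : ContinuousOn (fun x => (l x)⁻¹) (Set.Ioi 0) :=
    hc.inv₀ (fun x hx => (hp x hx).ne')
  have hp' : ∀ x > (0:ℝ), 0 < (l x)⁻¹ := fun x hx => inv_pos.2 (hp x hx)
  have hsv' : ∀ lam > (0:ℝ), Tendsto (fun x => (l (lam * x))⁻¹ / (l x)⁻¹) atTop (nhds 1) := by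
    intro lam hlam
    have := ((hsv lam hlam).inv₀ one_ne_zero)
    simp only [inv_one] at this
    apply this.congr
    intro x
    rw [inv_div, div_eq_mul_inv, div_eq_mul_inv, inv_inv, mul_comm]
  have := (sv_rpow_mul_atTop hc' hp' hsv' hδ).inv_tendsto_atTop
  apply this.congr
  intro x
  simp [mul_inv, div_eq_mul_inv, mul_comm]

/-- helper: (u x)^γ / l(1/(u x)) → 0 when u → 0⁺. -/
lemma sv_helper1 {l : ℝ → ℝ}
    (hc : ContinuousOn l (Set.Ioi 0)) (hp : ∀ x > (0:ℝ), 0 < l x)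
    (hsv : ∀ lam > (0:ℝ), Tendsto (fun x => l (lam * x) / l x) atTop (nhds 1))
    {γ : ℝ} (hγ : 0 < γ) {F : Filter ℝ} {u : ℝ → ℝ}
    (hu : Tendsto u F (nhdsWithin 0 (Set.Ioi 0))) :
    Tendsto (fun x => (u x) ^ γ / l (1 / (u x))) F (nhds 0) := by
  have hv : Tendsto (fun x => (u x)⁻¹) F atTop := tendsto_inv_nhdsGT_zero.comp hu
  have h1 : Tendsto (fun x => ((u x)⁻¹ ^ γ * l ((u x)⁻¹))⁻¹) F (nhds 0) :=
    ((sv_rpow_mul_atTop hc hp hsv hγ).comp hv).inv_tendsto_atTop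
  apply h1.congr'
  have hpos : ∀ᶠ x in F, u x ∈ Set.Ioi (0:ℝ) := hu.eventually self_mem_nhdsWithin
  filter_upwards [hpos] with x hx
  have hx0 : 0 < u x := hx
  rw [Real.inv_rpow hx0.le, mul_inv, inv_inv, one_div, ← div_eq_mul_inv]

noncomputable def gfun (β α : ℝ) (l lν : ℝ → ℝ) (ε t : ℝ) : ℝ :=
  (t ^ (1-β) / l (1/t)) * ((ε/t) ^ α * lν (ε/t))

/-- g(ε,·) → ∞ as t → 0⁺, for fixed ε > 0. -/
lemma gfun_atTop {β α : ℝ} (hβ : β ∈ Set.Ioo (0:ℝ) 1) (hα : α ∈ Set.Ioo (1:ℝ) 2)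
    {l lν : ℝ → ℝ}
    (hl_cont : ContinuousOn l (Set.Ioi 0)) (hl_pos : ∀ x > (0:ℝ), 0 < l x)
    (hl_sv : ∀ lam > (0:ℝ), Tendsto (fun x => l (lam * x) / l x) atTop (nhds 1))
    (hlν_cont : ContinuousOn lν (Set.Ioi 0)) (hlν_pos : ∀ x > (0:ℝ), 0 < lν x)
    (hlν_sv : ∀ lam > (0:ℝ), Tendsto (fun x => lν (lam * x) / lν x) atTop (nhds 1))
    {ε : ℝ} (hε : 0 < ε) :
    Tendsto (fun t => gfun β α l lν ε t) (nhdsWithin 0 (Set.Ioi 0)) atTop := by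
  obtain ⟨hβ0, hβ1⟩ := hβ
  obtain ⟨hα1, hα2⟩ := hα
  set δ := (α + β - 1)/4 with hδdef
  have hδ : 0 < δ := by simp only [hδdef]; linarith
  -- the substituted function
  have stepA : Tendsto (fun s => gfun β α l lν ε s⁻¹) atTop atTop := by
    have hBtend : Tendsto (fun s : ℝ => (ε^α/ε^δ) * s ^ (α-(1-β)-δ-δ)) atTop atTop := by
      apply Filter.Tendsto.const_mul_atTop
      · positivity
      · apply tendsto_rpow_atTop; simp only [hδdef]; linarith
    apply tendsto_atTop_mono' _ _ hBtend
    have hl_le : ∀ᶠ s in atTop, l s ≤ s ^ δ := by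
      filter_upwards [(sv_div_rpow_zero hl_cont hl_pos hl_sv hδ).eventually
        (eventually_le_nhds one_pos), eventually_gt_atTop 0] with s h hs
      have : (0:ℝ) < s ^ δ := Real.rpow_pos_of_pos hs δ
      calc l s = (l s / s ^ δ) * s ^ δ := by field_simp
        _ ≤ 1 * s ^ δ := by apply mul_le_mul_of_nonneg_right h this.le
        _ = s ^ δ := one_mul _
    have hlν_ge : ∀ᶠ s in atTop, ((ε*s) ^ δ)⁻¹ ≤ lν (ε*s) := by
      have hcomp : Tendsto (fun s => ε * s) atTop atTop :=
        Filter.Tendsto.const_mul_atTop hε tendsto_id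
      have := (sv_rpow_mul_atTop hlν_cont hlν_pos hlν_sv hδ).comp hcomp
      filter_upwards [this.eventually (eventually_ge_atTop 1),
        eventually_gt_atTop 0] with s h hs
      have hp : (0:ℝ) < (ε*s) ^ δ := Real.rpow_pos_of_pos (by positivity) δ
      rw [inv_le_iff_one_le_mul₀ hp]
      simpa [mul_comm] using h
    filter_upwards [hl_le, hlν_ge, eventually_gt_atTop 0] with s hle hge hs
    have hεs : (0:ℝ) < ε * s := by positivity
    have e1 : (1:ℝ)/s⁻¹ = s := by field_simp
    have e2 : ε/s⁻¹ = ε * s := by field_simp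
    have e3 : (s⁻¹) ^ (1-β) = (s ^ (1-β))⁻¹ := Real.inv_rpow hs.le _
    rw [gfun, e1, e2, e3]
    have hls : 0 < l s := hl_pos s hs
    have hsp : ∀ a : ℝ, (0:ℝ) < s ^ a := fun a => Real.rpow_pos_of_pos hs a
    have hεsp : ∀ a : ℝ, (0:ℝ) < (ε*s) ^ a := fun a => Real.rpow_pos_of_pos hεs a
    have step1 : ((s ^ (1-β))⁻¹ / s ^ δ) * ((ε*s) ^ α * ((ε*s) ^ δ)⁻¹)
        ≤ ((s ^ (1-β))⁻¹ / l s) * ((ε*s) ^ α * lν (ε*s)) := by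
      gcongr <;> first | positivity | exact hl_pos s hs | exact hle | exact hge
    refine le_trans (le_of_eq ?_) step1
    rw [Real.mul_rpow hε.le hs.le, Real.mul_rpow hε.le hs.le,
      Real.rpow_sub hs, Real.rpow_sub hs, Real.rpow_sub hs]
    field_simp
  have : Tendsto ((fun s => gfun β α l lν ε s⁻¹) ∘ (fun t => t⁻¹))
      (nhdsWithin 0 (Set.Ioi 0)) atTop := stepA.comp tendsto_inv_nhdsGT_zero
  apply this.congr
  intro t
  simp [Function.comp, inv_inv]

noncomputable def e2 (β α : ℝ) (l lν : ℝ → ℝ) (ε : ℝ) : ℝ :=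
  sInf ({t | t ∈ Set.Ioc 0 ε ∧ gfun β α l lν ε t ≤ 1} ∪ {ε})

lemma gfun_contAt {β α : ℝ} {l lν : ℝ → ℝ}
    (hl_cont : ContinuousOn l (Set.Ioi 0)) (hl_pos : ∀ x > (0:ℝ), 0 < l x)
    (hlν_cont : ContinuousOn lν (Set.Ioi 0))
    {ε t₀ : ℝ} (hε : 0 < ε) (ht₀ : 0 < t₀) :
    ContinuousAt (gfun β α l lν ε) t₀ := by
  have hinv : ContinuousAt (fun t : ℝ => 1/t) t₀ := (continuousAt_const.div continuousAt_id ht₀.ne')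
  have hdiv : ContinuousAt (fun t : ℝ => ε/t) t₀ := (continuousAt_const.div continuousAt_id ht₀.ne')
  have h1 : ContinuousAt (fun t : ℝ => t ^ (1-β)) t₀ :=
    Real.continuousAt_rpow_const t₀ _ (Or.inl ht₀.ne')
  have h2 : ContinuousAt (fun t : ℝ => l (1/t)) t₀ := by
    apply ContinuousAt.comp _ hinv
    exact hl_cont.continuousAt (Ioi_mem_nhds (by positivity))
  have h3 : ContinuousAt (fun t : ℝ => (ε/t) ^ α) t₀ :=
    ContinuousAt.comp (Real.continuousAt_rpow_const (ε/t₀) α (Or.inl (by positivity))) hdiv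
  have h4 : ContinuousAt (fun t : ℝ => lν (ε/t)) t₀ := by
    apply ContinuousAt.comp _ hdiv
    exact hlν_cont.continuousAt (Ioi_mem_nhds (by positivity))
  exact (h1.div h2 (hl_pos _ (by positivity)).ne').mul (h3.mul h4)

lemma e2_props {β α : ℝ} (hβ : β ∈ Set.Ioo (0:ℝ) 1) (hα : α ∈ Set.Ioo (1:ℝ) 2)
    {l lν : ℝ → ℝ}
    (hl_cont : ContinuousOn l (Set.Ioi 0)) (hl_pos : ∀ x > (0:ℝ), 0 < l x)
    (hl_sv : ∀ lam > (0:ℝ), Tendsto (fun x => l (lam * x) / l x) atTop (nhds 1))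
    (hlν_cont : ContinuousOn lν (Set.Ioi 0)) (hlν_pos : ∀ x > (0:ℝ), 0 < lν x)
    (hlν_sv : ∀ lam > (0:ℝ), Tendsto (fun x => lν (lam * x) / lν x) atTop (nhds 1))
    {ε : ℝ} (hε : 0 < ε) :
    (0 < e2 β α l lν ε ∧ e2 β α l lν ε ≤ ε) ∧
    (∀ c, 0 < c → c ≤ ε → gfun β α l lν ε c ≤ 1 → e2 β α l lν ε ≤ c) ∧
    (gfun β α l lν ε ε ≤ 1 → gfun β α l lν ε (e2 β α l lν ε) = 1) := by
  set g := gfun β α l lν ε with hg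
  set A : Set ℝ := {t | t ∈ Set.Ioc 0 ε ∧ g t ≤ 1} ∪ {ε} with hA
  have he2 : e2 β α l lν ε = sInf A := rfl
  -- lower bound a
  have hev : ∀ᶠ t in nhdsWithin 0 (Set.Ioi 0), 1 < g t :=
    (gfun_atTop hβ hα hl_cont hl_pos hl_sv hlν_cont hlν_pos hlν_sv hε).eventually
      (eventually_gt_atTop 1)
  obtain ⟨u, hu, hu2⟩ := mem_nhdsGT_iff_exists_Ioc_subset.1 hev
  set a : ℝ := min u ε with ha
  have ha0 : 0 < a := lt_min hu hε
  have haε : a ≤ ε := min_le_right _ _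
  have hgt : ∀ t, 0 < t → t ≤ a → 1 < g t := by
    intro t ht1 ht2
    exact hu2 ⟨ht1, le_trans ht2 (min_le_left _ _)⟩
  have hsub : A ⊆ Set.Icc a ε := by
    rintro t (⟨⟨ht0, htε⟩, hgle⟩ | ht)
    · refine ⟨?_, htε⟩
      by_contra h
      push_neg at h
      exact absurd hgle (not_le.2 (hgt t ht0 h.le))
    · rw [Set.mem_singleton_iff] at ht
      rw [ht]; exact ⟨haε, le_refl _⟩
  have hεA : ε ∈ A := Or.inr rfl
  have hne : A.Nonempty := ⟨ε, hεA⟩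
  have hbdd : BddBelow A := ⟨a, fun t ht => (hsub ht).1⟩
  have hle : sInf A ≤ ε := csInf_le hbdd hεA
  have hge : a ≤ sInf A := le_csInf hne (fun t ht => (hsub ht).1)
  refine ⟨⟨lt_of_lt_of_le ha0 hge, hle⟩, fun c hc1 hc2 hc3 => csInf_le hbdd (Or.inl ⟨⟨hc1, hc2⟩, hc3⟩), ?_⟩
  intro hgε
  -- A is compact
  have hAeq : A = (Set.Icc a ε ∩ g ⁻¹' Set.Iic 1) ∪ {ε} := by
    ext t
    constructor
    · rintro (⟨htm, hgle⟩ | ht)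
      · exact Or.inl ⟨hsub (Or.inl ⟨htm, hgle⟩), hgle⟩
      · exact Or.inr ht
    · rintro (⟨⟨hta, htε⟩, hgle⟩ | ht)
      · exact Or.inl ⟨⟨lt_of_lt_of_le ha0 hta, htε⟩, hgle⟩
      · exact Or.inr ht
  have hgOn : ContinuousOn g (Set.Icc a ε) := fun t ht =>
    (gfun_contAt hl_cont hl_pos hlν_cont hε (lt_of_lt_of_le ha0 ht.1)).continuousWithinAt
  have hclosed : IsClosed A := by
    rw [hAeq]
    exact (hgOn.preimage_isClosed_of_isClosed isClosed_Icc isClosed_Iic).union isClosed_singleton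
  have hcomp : IsCompact A := IsCompact.of_isClosed_subset isCompact_Icc hclosed hsub
  have hmem : sInf A ∈ A := hcomp.sInf_mem hne
  set t₀ := sInf A with ht₀def
  have ht₀pos : 0 < t₀ := lt_of_lt_of_le ha0 hge
  have hle1 : g t₀ ≤ 1 := by
    rcases hmem with (⟨_, h⟩ | h)
    · exact h
    · rw [h]; exact hgε
  have hge1 : 1 ≤ g t₀ := by
    have hcont := (gfun_contAt (β := β) (α := α) hl_cont hl_pos hlν_cont hε ht₀pos).continuousWithinAt
      (s := Set.Iio t₀)
    have hNB : (nhdsWithin t₀ (Set.Iio t₀)).NeBot := by infer_instance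
    apply ge_of_tendsto hcont
    have hmemIoo : Set.Ioo 0 t₀ ∈ nhdsWithin t₀ (Set.Iio t₀) :=
      Ioo_mem_nhdsLT_of_mem ⟨ht₀pos, le_refl _⟩
    filter_upwards [hmemIoo] with t ht
    have htnotA : t ∉ A := fun hmem' => absurd (csInf_le hbdd hmem') (not_le.2 ht.2)
    have : ¬ (g t ≤ 1) := by
      intro hgle
      exact htnotA (Or.inl ⟨⟨ht.1, le_trans ht.2.le hle⟩, hgle⟩)
    linarith [not_le.1 this]
  rw [he2]
  linarith

noncomputable def e1 (β α : ℝ) (l lν : ℝ → ℝ) (ε : ℝ) : ℝ :=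
  (e2 β α l lν ε) ^ (1-β) / l (1/(e2 β α l lν ε))


/-- Existence of the time and space rescaling scales `ε'` and `ε''`. -/
theorem stmt_0 (β α : ℝ) (hβ : β ∈ Set.Ioo (0:ℝ) 1) (hα : α ∈ Set.Ioo (1:ℝ) 2)
    (l lν : ℝ → ℝ)
    (hl_cont : ContinuousOn l (Set.Ioi 0)) (hl_pos : ∀ x > (0:ℝ), 0 < l x)
    (hl_sv : ∀ lam > (0:ℝ), Tendsto (fun x => l (lam * x) / l x) atTop (nhds 1))
    (hlν_cont : ContinuousOn lν (Set.Ioi 0)) (hlν_pos : ∀ x > (0:ℝ), 0 < lν x)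
    (hlν_sv : ∀ lam > (0:ℝ), Tendsto (fun x => lν (lam * x) / lν x) atTop (nhds 1)) :
    ∃ e' e'' : ℝ → ℝ,
      (∀ ε ∈ Set.Ioc (0:ℝ) 1, 0 < e' ε ∧ 0 < e'' ε) ∧
      Tendsto e' (nhdsWithin 0 (Set.Ioi 0)) (nhds 0) ∧
      Tendsto e'' (nhdsWithin 0 (Set.Ioi 0)) (nhds 0) ∧
      Tendsto (fun ε => e'' ε / ε) (nhdsWithin 0 (Set.Ioi 0)) (nhds 0) ∧
      Tendsto (fun ε => (e'' ε / e' ε) / ((e'' ε) ^ β * l (1 / e'' ε)))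
        (nhdsWithin 0 (Set.Ioi 0)) (nhds 1) ∧
      Tendsto (fun ε => e' ε * (ε / e'' ε) ^ α * lν (ε / e'' ε))
        (nhdsWithin 0 (Set.Ioi 0)) (nhds 1) := by
  obtain ⟨hβ0, hβ1⟩ := id hβ
  obtain ⟨hα1, hα2⟩ := id hα
  have props := fun (ε : ℝ) (hε : 0 < ε) =>
    e2_props hβ hα hl_cont hl_pos hl_sv hlν_cont hlν_pos hlν_sv hε
  set L := nhdsWithin (0:ℝ) (Set.Ioi 0) with hL
  have hLpos : ∀ᶠ ε in L, (0:ℝ) < ε := self_mem_nhdsWithin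
  -- g ε (c ε) eventually ≤ 1
  have hgc : ∀ c : ℝ, 0 < c → ∀ᶠ ε in L, gfun β α l lν ε (c*ε) ≤ 1 := by
    intro c hc
    have hu : Tendsto (fun ε : ℝ => c * ε) L (nhdsWithin 0 (Set.Ioi 0)) := by
      apply tendsto_nhdsWithin_of_tendsto_nhds_of_eventually_within
      · have h0 : Tendsto (fun ε : ℝ => c * ε) (nhds 0) (nhds 0) := by
          simpa [Pi.mul_def] using (continuous_const.mul continuous_id).tendsto (0:ℝ)
        exact h0.mono_left nhdsWithin_le_nhds
      · filter_upwards [hLpos] with ε hε; exact mul_pos hc hε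
    have h1 : Tendsto (fun ε => ((c*ε) ^ (1-β) / l (1/(c*ε))) * ((1/c)^α * lν (1/c)))
        L (nhds 0) := by
      simpa using (sv_helper1 hl_cont hl_pos hl_sv (by linarith : (0:ℝ) < 1-β) hu).mul_const
        ((1/c)^α * lν (1/c))
    have h2 : Tendsto (fun ε => gfun β α l lν ε (c*ε)) L (nhds 0) := by
      apply h1.congr'
      filter_upwards [hLpos] with ε hε
      have hεc : ε / (c*ε) = 1/c := by field_simp
      rw [gfun, hεc]
    filter_upwards [h2.eventually (eventually_le_nhds one_pos)] with ε h
    exact h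
  -- E ≤ c ε eventually
  have hcsmall : ∀ c : ℝ, 0 < c → c ≤ 1 → ∀ᶠ ε in L, e2 β α l lν ε ≤ c * ε := by
    intro c hc hc1
    filter_upwards [hgc c hc, hLpos] with ε h hε
    exact (props ε hε).2.1 (c*ε) (mul_pos hc hε) (by nlinarith) h
  -- E → 0
  have hEto0 : Tendsto (e2 β α l lν) L (nhds 0) := by
    apply squeeze_zero' (f := e2 β α l lν) (g := fun ε => ε)
    · filter_upwards [hLpos] with ε hε; exact ((props ε hε).1.1).le
    · filter_upwards [hLpos] with ε hε; exact (props ε hε).1.2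
    · exact tendsto_id.mono_left nhdsWithin_le_nhds
  have hE2L : Tendsto (e2 β α l lν) L (nhdsWithin 0 (Set.Ioi 0)) := by
    apply tendsto_nhdsWithin_of_tendsto_nhds_of_eventually_within _ hEto0
    filter_upwards [hLpos] with ε hε; exact (props ε hε).1.1
  refine ⟨e1 β α l lν, e2 β α l lν, ?_, ?_, hEto0, ?_, ?_, ?_⟩
  · -- positivity
    rintro ε ⟨hε, -⟩
    have hE := (props ε hε).1.1
    refine ⟨?_, hE⟩
    rw [e1]
    exact div_pos (Real.rpow_pos_of_pos hE _) (hl_pos _ (by positivity))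
  · -- e' → 0
    exact sv_helper1 hl_cont hl_pos hl_sv (by linarith : (0:ℝ) < 1-β) hE2L
  · -- E/ε → 0
    rw [tendsto_order]
    constructor
    · intro c hc
      filter_upwards [hLpos] with ε hε
      have := (props ε hε).1.1
      have : 0 < e2 β α l lν ε / ε := div_pos this hε
      linarith
    · intro c hc
      have hc' : 0 < min (c/2) 1 := lt_min (by linarith) one_pos
      filter_upwards [hcsmall (min (c/2) 1) hc' (min_le_right _ _), hLpos] with ε h hε
      have : e2 β α l lν ε / ε ≤ min (c/2) 1 := by
        rw [div_le_iff₀ hε]; linarith [h]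
      have h2 : min (c/2) 1 ≤ c/2 := min_le_left _ _
      linarith
  · -- condition 4 : ratio ≡ 1
    apply Filter.Tendsto.congr' _ (tendsto_const_nhds (x := (1:ℝ)))
    filter_upwards [hLpos] with ε hε
    set p := e2 β α l lν ε with hp
    have hppos : 0 < p := (props ε hε).1.1
    have hlpos : 0 < l (1/p) := hl_pos _ (by positivity)
    have hpβ : (0:ℝ) < p ^ β := Real.rpow_pos_of_pos hppos _
    have h1β : p ^ (1-β) = p / p ^ β := by
      rw [Real.rpow_sub hppos, Real.rpow_one]
    show (1:ℝ) = (p / e1 β α l lν ε) / (p ^ β * l (1/p))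
    rw [e1, ← hp, h1β]
    field_simp
  · -- condition 5 : product ≡ 1
    apply Filter.Tendsto.congr' _ (tendsto_const_nhds (x := (1:ℝ)))
    filter_upwards [hgc 1 one_pos, hLpos] with ε h1 hε
    have hgε : gfun β α l lν ε ε ≤ 1 := by simpa using h1
    have hkey := (props ε hε).2.2 hgε
    show (1:ℝ) = e1 β α l lν ε * (ε / e2 β α l lν ε) ^ α * lν (ε / e2 β α l lν ε)
    rw [← hkey, gfun, e1]
    ring
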